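/- For the complete graph K_{n+1} (one edge (i,j) for each ordered pair i ≠ j), the number of K_{n+1}-parking functions equals (n+1)^{n-1}. -/

import Mathlib

open Finset

open scoped Classical

/-- A subtree of the digraph (with multiplicity function `E`) on vertices
`{0,...,n}`, rooted at `0`: every non-root vertex of the subtree has a unique
outgoing edge (its parent together with the index of a parallel edge), and
iterating parents reaches the root. -/
structure Subtree (n : ℕ) (E : Fin (n+1) → Fin (n+1) → ℕ) where
  par : Fin (n+1) → Option (Fin (n+1) × ℕ)
  root_par : par 0 = none
  edge_valid : ∀ v p k, par v = some (p, k) → k < E v p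
  parent_mem : ∀ v p k, par v = some (p, k) → p = 0 ∨ (par p).isSome
  reaches : ∀ v, (par v).isSome →
    Relation.ReflTransGen (fun a c => ∃ k, par a = some (c, k)) v 0

noncomputable def Subtree.verts {n : ℕ} {E : Fin (n+1) → Fin (n+1) → ℕ}
    (t : Subtree n E) : Finset (Fin (n+1)) :=
  Finset.univ.filter (fun v => v = 0 ∨ (t.par v).isSome)

def Subtree.IsSubtreeOf {n : ℕ} {E : Fin (n+1) → Fin (n+1) → ℕ}
    (t T : Subtree n E) : Prop :=
  ∀ v, (t.par v).isSome → t.par v = T.par v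

def Subtree.IsSpanning {n : ℕ} {E : Fin (n+1) → Fin (n+1) → ℕ}
    (T : Subtree n E) : Prop :=
  ∀ v, v ∈ T.verts

/-- `b` is a `G`-parking function: for every non-empty set `U` of non-root
vertices there is `j ∈ U` with more than `b j` edges from `j` to the
complement of `U`. (The value `b 0` at the root is irrelevant.) -/
def IsParking {n : ℕ} (E : Fin (n+1) → Fin (n+1) → ℕ) (b : Fin (n+1) → ℕ) : Prop :=
  ∀ U : Finset (Fin (n+1)), U.Nonempty → 0 ∉ U → ∃ j ∈ U, b j < ∑ i ∈ Uᶜ, E j i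

/-- The complete digraph on `{0,...,n}`: one edge `(i,j)` for each ordered
pair of distinct vertices. -/
def completeE (n : ℕ) : Fin (n+1) → Fin (n+1) → ℕ := fun i j =>
  if i = j then 0 else 1

namespace PF

variable {n : ℕ}

/-- number of j with a j = x -/
noncomputable def cnt (a : Fin n → ZMod (n+1)) (x : ZMod (n+1)) : ℕ :=
  (univ.filter (fun j => a j = x)).card

noncomputable def Ncnt (a : Fin n → ZMod (n+1)) (m : ℕ) : ℕ :=
  ∑ k ∈ range m, cnt a (k : ZMod (n+1))

noncomputable def Sfn (a : Fin n → ZMod (n+1)) (m : ℕ) : ℤ :=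
  (Ncnt a m : ℤ) - m

lemma sum_cnt (a : Fin n → ZMod (n+1)) : ∑ x : ZMod (n+1), cnt a x = n := by
  classical
  have := Finset.card_eq_sum_card_fiberwise (f := a) (s := univ) (t := univ)
    (fun x _ => mem_univ _)
  simpa [cnt, Finset.card_univ] using this.symm

lemma Ncnt_period_base (a : Fin n → ZMod (n+1)) : Ncnt a (n+1) = n := by
  classical
  have h : Ncnt a (n+1) = ∑ x : ZMod (n+1), cnt a x := by
    rw [Ncnt]
    refine Finset.sum_nbij' (fun k => (k : ZMod (n+1))) (fun x => x.val) ?_ ?_ ?_ ?_ ?_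
    · intro k _; exact mem_univ _
    · intro x _; exact mem_range.mpr x.val_lt
    · intro k hk; simp [ZMod.val_cast_of_lt (mem_range.mp hk)]
    · intro x _; simp [ZMod.natCast_val, ZMod.cast_id]
    · intros; rfl
  rw [h, sum_cnt]

lemma Ncnt_period (a : Fin n → ZMod (n+1)) (m : ℕ) :
    Ncnt a (m + (n+1)) = Ncnt a m + n := by
  induction m with
  | zero => simpa [Ncnt] using Ncnt_period_base a
  | succ m ih =>
      have h1 : m + 1 + (n+1) = (m + (n+1)) + 1 := by ring
      have hc : ((m + (n+1) : ℕ) : ZMod (n+1)) = (m : ZMod (n+1)) := by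
        push_cast; simp
      have h2 : Ncnt a (m+1+(n+1)) = Ncnt a (m+(n+1)) + cnt a ((m+(n+1) : ℕ) : ZMod (n+1)) := by
        rw [h1]; exact Finset.sum_range_succ _ _
      have h3 : Ncnt a (m+1) = Ncnt a m + cnt a ((m : ℕ) : ZMod (n+1)) :=
        Finset.sum_range_succ _ _
      rw [h2, ih, hc, h3]; ring

lemma Sfn_period (a : Fin n → ZMod (n+1)) (m : ℕ) :
    Sfn a (m + (n+1)) = Sfn a m - 1 := by
  simp only [Sfn, Ncnt_period]
  push_cast; ring

/-- `e` is a good starting point -/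
def Good (a : Fin n → ZMod (n+1)) (e : ℕ) : Prop :=
  ∀ m, e < m → m ≤ e + n → Sfn a e ≤ Sfn a m

lemma good_unique (a : Fin n → ZMod (n+1)) {i j : ℕ} (hi1 : 1 ≤ i) (hin : i ≤ n+1)
    (hj1 : 1 ≤ j) (hjn : j ≤ n+1) (hgi : Good a i) (hgj : Good a j) (hij : i < j) :
    False := by
  have h1 : Sfn a j ≥ Sfn a i := hgi j hij (by omega)
  have h2 : Sfn a (i + (n+1)) ≥ Sfn a j := hgj (i + (n+1)) (by omega) (by omega)
  rw [Sfn_period] at h2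
  omega

lemma good_exists (a : Fin n → ZMod (n+1)) :
    ∃ e, 1 ≤ e ∧ e ≤ n+1 ∧ Good a e := by
  classical
  have hne : (Finset.Icc 1 (n+1)).Nonempty := ⟨1, by simp⟩
  obtain ⟨e0, he0, hmin⟩ := Finset.exists_min_image (Finset.Icc 1 (n+1)) (Sfn a) hne
  have hex : ∃ e, (e ∈ Finset.Icc 1 (n+1) ∧ ∀ m ∈ Finset.Icc 1 (n+1), Sfn a e ≤ Sfn a m) :=
    ⟨e0, he0, hmin⟩
  obtain ⟨hemem, hemin⟩ := Nat.find_spec hex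
  set e := Nat.find hex with hedef
  simp only [Finset.mem_Icc] at hemem
  refine ⟨e, hemem.1, hemem.2, ?_⟩
  have hstrict : ∀ k, 1 ≤ k → k < e → Sfn a e < Sfn a k := by
    intro k hk1 hke
    have hk2 : k ≤ n + 1 := by omega
    have h1 : Sfn a e ≤ Sfn a k := hemin k (Finset.mem_Icc.mpr ⟨hk1, hk2⟩)
    rcases lt_or_eq_of_le h1 with h | h
    · exact h
    · exfalso
      have : ¬ (k ∈ Finset.Icc 1 (n+1) ∧ ∀ m ∈ Finset.Icc 1 (n+1), Sfn a k ≤ Sfn a m) :=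
        Nat.find_min hex hke
      exact this ⟨Finset.mem_Icc.mpr ⟨hk1, hk2⟩, fun m hm => h ▸ hemin m hm⟩
  intro m hem hmn
  by_cases hm : m ≤ n + 1
  · exact hemin m (Finset.mem_Icc.mpr ⟨by omega, hm⟩)
  · have hm' : m = (m - (n+1)) + (n+1) := by omega
    rw [hm', Sfn_period]
    have := hstrict (m - (n+1)) (by omega) (by omega)
    omega

/-- parking property of `a` in prefix-sum form -/
def Park (a : Fin n → ZMod (n+1)) : Prop :=
  ∀ m, 1 ≤ m → m ≤ n → 0 ≤ Sfn a m

lemma cnt_shift (a : Fin n → ZMod (n+1)) (c x : ZMod (n+1)) :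
    cnt (fun j => a j + c) x = cnt a (x - c) := by
  unfold cnt
  congr 1
  apply Finset.filter_congr
  intro j _
  simp only [eq_sub_iff_add_eq]

lemma Ncnt_shift (a : Fin n → ZMod (n+1)) (c : ZMod (n+1)) {e : ℕ}
    (he : (e : ZMod (n+1)) = -c) (m : ℕ) :
    Ncnt a (e+m) = Ncnt a e + Ncnt (fun j => a j + c) m := by
  have h1 : Ncnt (fun j => a j + c) m = ∑ k ∈ range m, cnt a ((e + k : ℕ) : ZMod (n+1)) := by
    unfold Ncnt
    apply Finset.sum_congr rfl
    intro k _
    rw [cnt_shift]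
    congr 1
    push_cast [he]
    ring
  have h2 : Ncnt a (e+m) = Ncnt a e + ∑ k ∈ Finset.Ico e (e+m), cnt a (k : ZMod (n+1)) := by
    unfold Ncnt
    rw [Finset.range_eq_Ico,
      ← Finset.sum_Ico_consecutive _ (Nat.zero_le e) (Nat.le_add_right e m), Finset.range_eq_Ico]
  rw [h1, h2, Finset.sum_Ico_eq_sum_range]
  simp

lemma Sfn_shift (a : Fin n → ZMod (n+1)) (c : ZMod (n+1)) {e : ℕ}
    (he : (e : ZMod (n+1)) = -c) (m : ℕ) :
    Sfn (fun j => a j + c) m = Sfn a (e+m) - Sfn a e := by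
  have := Ncnt_shift a c he m
  unfold Sfn
  rw [this]
  push_cast
  ring

lemma park_shift_iff_good (a : Fin n → ZMod (n+1)) (c : ZMod (n+1)) {e : ℕ}
    (he : (e : ZMod (n+1)) = -c) :
    Park (fun j => a j + c) ↔ Good a e := by
  constructor
  · intro hp m hm1 hm2
    have := hp (m - e) (by omega) (by omega)
    rw [Sfn_shift a c he] at this
    have hme : e + (m - e) = m := by omega
    rw [hme] at this
    omega
  · intro hg m hm1 hm2
    rw [Sfn_shift a c he]
    have := hg (e + m) (by omega) (by omega)
    omega

lemma exists_unique_shift (a : Fin n → ZMod (n+1)) :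
    ∃! c : ZMod (n+1), Park (fun j => a j + c) := by
  obtain ⟨e, he1, he2, heg⟩ := good_exists a
  refine ⟨-(e : ZMod (n+1)), ?_, ?_⟩
  · exact (park_shift_iff_good a (-(e : ZMod (n+1)))
      (by ring : (e : ZMod (n+1)) = -(-(e : ZMod (n+1))))).mpr heg
  · intro c' hc'
    set e' := n + 1 - c'.val with he'def
    have hv : c'.val < n + 1 := ZMod.val_lt c'
    have he'1 : 1 ≤ e' := by omega
    have he'2 : e' ≤ n + 1 := by omega
    have hcast : (e' : ZMod (n+1)) = -c' := by
      have : ((n + 1 - c'.val : ℕ) : ZMod (n+1)) = ((n+1 : ℕ) : ZMod (n+1)) - (c'.val : ℕ) := by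
        push_cast [Nat.cast_sub (le_of_lt hv)]
        ring
      rw [he'def, this]
      simp [ZMod.natCast_self, ZMod.natCast_val, ZMod.cast_id]
    have hg' : Good a e' := (park_shift_iff_good a c' hcast).mp hc'
    have hee : e' = e := by
      rcases lt_trichotomy e' e with h | h | h
      · exact absurd (good_unique a he'1 he'2 he1 he2 hg' heg h) (fun x => x)
      · exact h
      · exact absurd (good_unique a he1 he2 he'1 he'2 heg hg' h) (fun x => x)
    rw [← neg_eq_iff_eq_neg.mpr hcast.symm] at *
    rw [hee] at hcast
    rw [eq_comm, neg_eq_iff_eq_neg, ← hcast]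

lemma card_park (n : ℕ) :
    Nat.card {a : Fin n → ZMod (n+1) // Park a} = (n+1)^(n-1) := by
  classical
  set f : {a : Fin n → ZMod (n+1) // Park a} × ZMod (n+1) → (Fin n → ZMod (n+1)) :=
    fun p => fun j => p.1.1 j + p.2 with hf
  have hbij : Function.Bijective f := by
    constructor
    · rintro ⟨⟨a, ha⟩, c⟩ ⟨⟨a', ha'⟩, c'⟩ h
      simp only [hf] at h
      set b : Fin n → ZMod (n+1) := fun j => a j + c with hb
      have hb' : (fun j => a' j + c') = b := by rw [← h]
      obtain ⟨d, _, huniq⟩ := exists_unique_shift b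
      have h1 : Park (fun j => b j + (-c)) := by
        have : (fun j => b j + (-c)) = a := by funext j; simp [hb]
        rw [this]; exact ha
      have h2 : Park (fun j => b j + (-c')) := by
        have : (fun j => b j + (-c')) = a' := by
          funext j
          have : b j = a' j + c' := by rw [← hb']
          rw [this]; ring
        rw [this]; exact ha'
      have hcc : -c = -c' := by rw [huniq _ h1, huniq _ h2]
      have hcc' : c = c' := by exact neg_injective hcc
      have haa : a = a' := by
        funext j
        have h3 : a j + c = a' j + c' := congrFun h j
        rw [hcc'] at h3
        exact add_right_cancel h3
      simp [haa, hcc']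
    · intro b
      obtain ⟨c, hc, _⟩ := exists_unique_shift b
      refine ⟨⟨⟨fun j => b j + c, hc⟩, -c⟩, ?_⟩
      funext j
      simp [hf]
  have h1 : Nat.card ({a : Fin n → ZMod (n+1) // Park a} × ZMod (n+1)) =
      Nat.card (Fin n → ZMod (n+1)) := Nat.card_eq_of_bijective f hbij
  rw [Nat.card_prod, Nat.card_fun, Nat.card_zmod, Nat.card_eq_fintype_card (α := Fin n),
    Fintype.card_fin] at h1
  rcases Nat.eq_zero_or_pos n with hn | hn
  · subst hn; simpa using h1
  · have : (n+1)^n = (n+1)^(n-1) * (n+1) := by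
      rw [← pow_succ]
      congr 1
      omega
    rw [this] at h1
    exact Nat.eq_of_mul_eq_mul_right (by omega) h1

lemma Ncnt_eq_card (a : Fin n → ZMod (n+1)) (m : ℕ) (hm : m ≤ n+1) :
    Ncnt a m = (univ.filter (fun j => (a j).val < m)).card := by
  classical
  have h := Finset.card_eq_sum_card_fiberwise
    (f := fun j => (a j).val) (s := univ.filter (fun j => (a j).val < m)) (t := range m)
    (by intro x hx; simp only [coe_filter, mem_filter, Set.mem_setOf_eq, mem_coe] at hx; exact mem_range.mpr hx.2)
  rw [h, Ncnt]
  apply Finset.sum_congr rfl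
  intro k hk
  have hk' : k < n + 1 := lt_of_lt_of_le (mem_range.mp hk) hm
  unfold cnt
  congr 1
  ext j
  simp only [mem_filter, mem_univ, true_and, Finset.filter_filter]
  constructor
  · intro h2
    have : (a j).val = k := by rw [h2, ZMod.val_cast_of_lt hk']
    constructor
    · rw [this]; exact mem_range.mp hk
    · exact this
  · rintro ⟨h1, h2⟩
    have hv : (a j).val = ((k : ZMod (n+1))).val := by rw [ZMod.val_cast_of_lt hk', h2]
    exact ZMod.val_injective _ hv

lemma card_succ_filter (P : Fin (n+1) → Prop) [DecidablePred P] :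
    (univ.filter (fun j : Fin (n+1) => j ≠ 0 ∧ P j)).card
      = (univ.filter (fun i : Fin n => P i.succ)).card := by
  classical
  have himg : (univ.filter (fun j : Fin (n+1) => j ≠ 0 ∧ P j))
      = (univ.filter (fun i : Fin n => P i.succ)).image Fin.succ := by
    ext j
    simp only [mem_filter, mem_univ, true_and, Finset.mem_image]
    constructor
    · rintro ⟨hj0, hPj⟩
      obtain ⟨i, hi⟩ := Fin.eq_succ_of_ne_zero hj0
      exact ⟨i, hi ▸ hPj, hi.symm⟩
    · rintro ⟨i, hPi, rfl⟩
      exact ⟨Fin.succ_ne_zero i, hPi⟩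
  rw [himg, Finset.card_image_of_injective _ (Fin.succ_injective n)]

lemma sum_completeE (b : Fin (n+1) → ℕ) (U : Finset (Fin (n+1))) (j : Fin (n+1))
    (hj : j ∈ U) : ∑ i ∈ Uᶜ, completeE n j i = Uᶜ.card := by
  rw [Finset.card_eq_sum_ones]
  apply Finset.sum_congr rfl
  intro i hi
  have : j ≠ i := by
    rintro rfl
    exact (Finset.mem_compl.mp hi) hj
  simp [completeE, this]

lemma card_ne_zero : (univ.filter (fun j : Fin (n+1) => j ≠ 0)).card = n := by
  classical
  rw [Finset.filter_ne' univ 0, Finset.card_erase_of_mem (mem_univ _), Finset.card_univ,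
    Fintype.card_fin]
  rfl

lemma isParking_iff (b : Fin (n+1) → ℕ) :
    IsParking (completeE n) b ↔
      ∀ t, t < n → t + 1 ≤ (univ.filter (fun j : Fin (n+1) => j ≠ 0 ∧ b j ≤ t)).card := by
  classical
  constructor
  · intro hp t ht
    set s := univ.filter (fun j : Fin (n+1) => j ≠ 0) with hs
    set A := s.filter (fun j => b j ≤ t) with hA
    set U := s.filter (fun j => ¬ (b j ≤ t)) with hU
    have hAU : A.card + U.card = n := by
      rw [hA, hU, Finset.card_filter_add_card_filter_not, hs, card_ne_zero]
    have hAcard : (univ.filter (fun j : Fin (n+1) => j ≠ 0 ∧ b j ≤ t)).card = A.card := by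
      rw [hA, hs, Finset.filter_filter]
    rw [hAcard]
    rcases Finset.eq_empty_or_nonempty U with hUe | hUne
    · rw [hUe] at hAU
      simp at hAU
      omega
    · have hU0 : (0 : Fin (n+1)) ∉ U := by
        rw [hU, hs]
        simp
      obtain ⟨j, hjU, hjb⟩ := hp U hUne hU0
      rw [sum_completeE b U j hjU] at hjb
      have hUc : Uᶜ.card = n + 1 - U.card := by
        rw [Finset.card_compl, Fintype.card_fin]
      have hbj : t < b j := by
        rw [hU] at hjU
        simp only [Finset.mem_filter] at hjU
        omega
      omega
  · intro hc U hUne hU0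
    have hUsub : U ⊆ univ.filter (fun j : Fin (n+1) => j ≠ 0) := by
      intro j hj
      simp only [mem_filter, mem_univ, true_and]
      rintro rfl
      exact hU0 hj
    have hUcard : U.card ≤ n := by
      have := Finset.card_le_card hUsub
      rwa [card_ne_zero] at this
    have hU1 : 1 ≤ U.card := Finset.card_pos.mpr hUne
    set t := n - U.card with htdef
    have ht : t < n := by omega
    have hAcard := hc t ht
    set A := univ.filter (fun j : Fin (n+1) => j ≠ 0 ∧ b j ≤ t) with hA
    have hint : (A ∩ U).Nonempty := by
      rw [← Finset.card_pos]
      have hsub : A ∪ U ⊆ univ.filter (fun j : Fin (n+1) => j ≠ 0) := by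
        apply Finset.union_subset _ hUsub
        intro j hj
        simp only [hA, mem_filter, mem_univ, true_and] at hj ⊢
        exact hj.1
      have h1 : (A ∪ U).card ≤ n := by
        have := Finset.card_le_card hsub
        rwa [card_ne_zero] at this
      have h2 := Finset.card_union_add_card_inter A U
      omega
    obtain ⟨j, hj⟩ := hint
    rw [Finset.mem_inter] at hj
    refine ⟨j, hj.2, ?_⟩
    rw [sum_completeE b U j hj.2]
    have hUc : Uᶜ.card = n + 1 - U.card := by
      rw [Finset.card_compl, Fintype.card_fin]
    have hbj : b j ≤ t := by
      have := hj.1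
      rw [hA] at this
      simp only [Finset.mem_filter] at this
      exact this.2.2
    omega

lemma parking_bound (b : Fin (n+1) → ℕ) (hb : IsParking (completeE n) b)
    {i : Fin (n+1)} (hi : i ≠ 0) : b i < n := by
  classical
  obtain ⟨j, hj, hlt⟩ := hb {i} ⟨i, Finset.mem_singleton_self i⟩
    (by rw [Finset.mem_singleton]; exact fun h => hi h.symm)
  rw [Finset.mem_singleton] at hj
  subst hj
  rw [sum_completeE b {j} j (Finset.mem_singleton_self j)] at hlt
  rwa [Finset.card_compl, Finset.card_singleton, Fintype.card_fin,
    Nat.add_sub_cancel] at hlt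

lemma park_of_isParking (b : Fin (n+1) → ℕ) (hb : IsParking (completeE n) b) :
    Park (fun j : Fin n => ((b j.succ : ℕ) : ZMod (n+1))) := by
  classical
  intro m hm1 hmn
  set a : Fin n → ZMod (n+1) := fun j => ((b j.succ : ℕ) : ZMod (n+1)) with ha
  have hval : ∀ j : Fin n, (a j).val = b j.succ := by
    intro j
    exact ZMod.val_cast_of_lt (Nat.lt_succ_of_lt (parking_bound b hb (Fin.succ_ne_zero j)))
  have hN : Ncnt a m = (univ.filter (fun j : Fin n => (a j).val < m)).card :=
    Ncnt_eq_card a m (by omega)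
  have hfe : (univ.filter (fun j : Fin n => (a j).val < m))
      = (univ.filter (fun j : Fin n => b j.succ ≤ m - 1)) := by
    apply Finset.filter_congr
    intro j _
    rw [hval j]
    omega
  have hcs := card_succ_filter (n := n) (fun i => b i ≤ m - 1)
  have hip := (isParking_iff b).mp hb (m-1) (by omega)
  have : (m : ℤ) ≤ Ncnt a m := by
    rw [hN, hfe, ← hcs]
    omega
  unfold Sfn
  omega

lemma isParking_of_park (a : Fin n → ZMod (n+1)) (ha : Park a) :
    IsParking (completeE n) (Fin.cases 0 fun j => (a j).val) := by
  classical
  rw [isParking_iff]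
  intro t ht
  have hcs := card_succ_filter (n := n)
    (fun i => (Fin.cases 0 (fun j => (a j).val) i : ℕ) ≤ t)
  rw [hcs]
  have hfe : (univ.filter (fun j : Fin n =>
        (Fin.cases 0 (fun j => (a j).val) j.succ : ℕ) ≤ t))
      = (univ.filter (fun j : Fin n => (a j).val < t + 1)) := by
    apply Finset.filter_congr
    intro j _
    simp only [Fin.cases_succ]
    omega
  rw [hfe, ← Ncnt_eq_card a (t+1) (by omega)]
  have := ha (t+1) (by omega) (by omega)
  unfold Sfn at this
  omega

end PF

theorem stmt_16 (n : ℕ) :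
    Nat.card {b : Fin (n+1) → ℕ // IsParking (completeE n) b ∧ b 0 = 0} =
      (n + 1) ^ (n - 1) := by
  classical
  have e : {b : Fin (n+1) → ℕ // IsParking (completeE n) b ∧ b 0 = 0}
      ≃ {a : Fin n → ZMod (n+1) // PF.Park a} :=
    { toFun := fun b => ⟨fun j => ((b.1 j.succ : ℕ) : ZMod (n+1)),
        PF.park_of_isParking b.1 b.2.1⟩
      invFun := fun a => ⟨Fin.cases 0 (fun j => (a.1 j).val),
        PF.isParking_of_park a.1 a.2, by simp⟩
      left_inv := by
        rintro ⟨b, hb, hb0⟩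
        ext i
        induction i using Fin.cases with
        | zero => simpa using hb0.symm
        | succ j =>
            simp only [Fin.cases_succ]
            exact ZMod.val_cast_of_lt
              (Nat.lt_succ_of_lt (PF.parking_bound b hb (Fin.succ_ne_zero j)))
      right_inv := by
        rintro ⟨a, ha⟩
        ext j
        simp only [Fin.cases_succ]
        rw [ZMod.natCast_val, ZMod.cast_id] }
  rw [Nat.card_congr e, PF.card_park]
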